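/- Let f ∈ ℂ[x] be a univariate polynomial of degree d, write f(x) = Σ_{i=0}^d c_i x^i, let r > 0 and k ∈ {0,…,d}, and suppose |c_k| r^k > (3/2) · Σ_{i ≠ k} |c_i| r^i. Then f has exactly k roots (counted with multiplicity) in the open disc of radius r centered at 0, and |f(x)| > (1/3) |c_k| r^k for all x on the boundary circle |x| = r. -/

import Mathlib

open Polynomial Finset

lemma pellet_logDeriv : ∀ (n : ℕ) (p : Polynomial ℂ), Multiset.card p.roots = n →
    ∀ x : ℂ, p.eval x ≠ 0 →
    logDeriv (fun z => p.eval z) x = (p.roots.map fun w => (x - w)⁻¹).sum := by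
  intro n
  induction n with
  | zero =>
    intro p hcard x hx
    have hp : p ≠ 0 := fun h => hx (by simp [h])
    have hroots : p.roots = 0 := Multiset.card_eq_zero.mp hcard
    have hdeg : p.natDegree = 0 := by
      have := (Polynomial.Splits.natDegree_eq_card_roots (f := p)
        (IsAlgClosed.splits p))
      simpa [hroots] using this
    obtain ⟨a, rfl⟩ := Polynomial.natDegree_eq_zero.mp hdeg
    simp [hroots, logDeriv_const]
  | succ n ih =>
    intro p hcard x hx
    have hp : p ≠ 0 := fun h => hx (by simp [h])
    obtain ⟨z, hz⟩ := Multiset.card_pos_iff_exists_mem.mp (by rw [hcard]; exact n.succ_pos)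
    have hroot : IsRoot p z := (Polynomial.mem_roots hp).mp hz
    obtain ⟨q, hq⟩ := (Polynomial.dvd_iff_isRoot).mpr hroot
    have hq0 : q ≠ 0 := by rintro rfl; exact hp (by simp [hq])
    have hXz : (X - C z) * q ≠ 0 := by rw [← hq]; exact hp
    have hroots : p.roots = z ::ₘ q.roots := by
      rw [hq, Polynomial.roots_mul hXz, Polynomial.roots_X_sub_C]
      simp
    have hqcard : Multiset.card q.roots = n := by
      have := hcard; rw [hroots] at this; simpa using this
    have hxz : x - z ≠ 0 := by
      intro h
      apply hx
      rw [hq]; simp [h]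
    have hqx : q.eval x ≠ 0 := by
      intro h; apply hx; rw [hq]; simp [h]
    have heq : (fun y => p.eval y) = fun y => (y - z) * q.eval y := by
      funext y; rw [hq]; simp
    rw [heq, logDeriv_mul x hxz hqx (by fun_prop) (q.differentiable.differentiableAt),
      hroots]
    have h1 : logDeriv (fun y : ℂ => y - z) x = (x - z)⁻¹ := by
      rw [logDeriv_apply, deriv_sub_const, deriv_id'', one_div]
    rw [h1, ih q hqcard x hqx, Multiset.map_cons, Multiset.sum_cons]

lemma pellet_logDeriv' (p : Polynomial ℂ) (x : ℂ) (hx : p.eval x ≠ 0) :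
    deriv (fun z => p.eval z) x / p.eval x = (p.roots.map fun w => (x - w)⁻¹).sum :=
  pellet_logDeriv _ p rfl x hx

lemma pellet_integ_zero {r : ℝ} (hr : 0 < r) (w : ℂ) (hw : r < ‖w‖) :
    (∮ z in C(0, r), (z - w)⁻¹) = 0 := by
  apply Complex.circleIntegral_eq_zero_of_differentiable_on_off_countable hr.le
    Set.countable_empty
  · refine ContinuousOn.inv₀ ((continuous_id.sub continuous_const).continuousOn) ?_
    intro y hy h
    have hy' : ‖y‖ ≤ r := by simpa using hy
    rw [sub_eq_zero] at h
    subst h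
    linarith
  · intro z hz
    have hz' : ‖z‖ < r := by simpa using hz.1
    have : z - w ≠ 0 := by
      intro h; rw [sub_eq_zero] at h; subst h; linarith
    exact ((differentiable_id.sub_const w).differentiableAt).inv this

lemma pellet_integrable {r : ℝ} (hr : 0 < r) (w : ℂ) (hw : ‖w‖ ≠ r) :
    CircleIntegrable (fun z => (z - w)⁻¹) 0 r := by
  apply ContinuousOn.circleIntegrable hr.le
  refine ContinuousOn.inv₀ ((continuous_id.sub continuous_const).continuousOn) ?_
  intro z hz h
  rw [sub_eq_zero] at h
  subst h
  exact hw (by simpa using hz)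

lemma pellet_ms_integrable {r : ℝ} (hr : 0 < r) (s : Multiset ℂ)
    (hs : ∀ w ∈ s, ‖w‖ ≠ r) :
    CircleIntegrable (fun z => (s.map fun w => (z - w)⁻¹).sum) 0 r := by
  induction s using Multiset.induction_on with
  | empty =>
    simp only [Multiset.map_zero, Multiset.sum_zero]
    exact continuousOn_const.circleIntegrable hr.le
  | cons w t ih =>
    have h1 : CircleIntegrable (fun z => (z - w)⁻¹) 0 r :=
      pellet_integrable hr w (hs w (Multiset.mem_cons_self w t))
    have h2 := ih (fun v hv => hs v (Multiset.mem_cons_of_mem hv))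
    simp only [Multiset.map_cons, Multiset.sum_cons]
    exact h1.add h2

lemma pellet_ms_integral {r : ℝ} (hr : 0 < r) (s : Multiset ℂ)
    (hs : ∀ w ∈ s, ‖w‖ ≠ r) :
    (∮ z in C(0, r), (s.map fun w => (z - w)⁻¹).sum) =
      (2 * Real.pi * Complex.I) * ((s.filter (fun z => ‖z‖ < r)).card : ℂ) := by
  induction s using Multiset.induction_on with
  | empty =>
    simp only [Multiset.map_zero, Multiset.sum_zero, Multiset.filter_zero,
      Multiset.card_zero, Nat.cast_zero, mul_zero]
    simp only [circleIntegral, smul_zero, intervalIntegral.integral_zero]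
  | cons w t ih =>
    have h1 : CircleIntegrable (fun z => (z - w)⁻¹) 0 r :=
      pellet_integrable hr w (hs w (Multiset.mem_cons_self w t))
    have h2 := pellet_ms_integrable hr t (fun v hv => hs v (Multiset.mem_cons_of_mem hv))
    have hsplit : (∮ z in C(0, r), ((w ::ₘ t).map fun v => (z - v)⁻¹).sum) =
        (∮ z in C(0, r), (z - w)⁻¹) +
        (∮ z in C(0, r), (t.map fun v => (z - v)⁻¹).sum) := by
      rw [circleIntegral.integral_congr hr.le
        (g := fun z => (z - w)⁻¹ + (t.map fun v => (z - v)⁻¹).sum)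
        (fun z _ => by simp [Multiset.map_cons, Multiset.sum_cons])]
      simp only [circleIntegral, smul_add]
      exact intervalIntegral.integral_add h1.out h2.out
    rw [hsplit, ih (fun v hv => hs v (Multiset.mem_cons_of_mem hv))]
    rcases lt_or_gt_of_ne (hs w (Multiset.mem_cons_self w t)) with h | h
    · rw [circleIntegral.integral_sub_inv_of_mem_ball (by simpa using h)]
      rw [Multiset.filter_cons_of_pos (p := fun z : ℂ => ‖z‖ < r) _ h, Multiset.card_cons]
      push_cast
      ring
    · rw [pellet_integ_zero hr w h, Multiset.filter_cons_of_neg (p := fun z : ℂ => ‖z‖ < r) _ (by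
        simp only [not_lt]; exact h.le)]
      ring

lemma pellet_count (p : Polynomial ℂ) {r : ℝ} (hr : 0 < r)
    (hp : ∀ x : ℂ, ‖x‖ = r → p.eval x ≠ 0) :
    (∮ z in C(0, r), deriv (fun y => p.eval y) z / p.eval z) =
      (2 * Real.pi * Complex.I) * ((p.roots.filter fun z => ‖z‖ < r).card : ℂ) := by
  have hp0 : p ≠ 0 := by
    intro h
    exact hp (r : ℂ) (by rw [Complex.norm_real]; exact abs_of_pos hr) (by simp [h])
  have hroots : ∀ w ∈ p.roots, ‖w‖ ≠ r := by
    intro w hw hwr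
    exact hp w hwr ((Polynomial.mem_roots hp0).mp hw)
  rw [circleIntegral.integral_congr hr.le
    (g := fun z => (p.roots.map fun w => (z - w)⁻¹).sum)
    (fun z hz => pellet_logDeriv' p z (hp z (by simpa using hz)))]
  exact pellet_ms_integral hr p.roots hroots

theorem pellet_test (f : Polynomial ℂ) (d k : ℕ) (hdeg : f.natDegree = d)
    (hk : k ≤ d) (r : ℝ) (hr : 0 < r)
    (hdom : ‖f.coeff k‖ * r ^ k >
      (3 / 2) * ∑ i ∈ (Finset.range (d + 1)).erase k, ‖f.coeff i‖ * r ^ i) :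
    (f.roots.filter (fun z => ‖z‖ < r)).card = k ∧
      ∀ x : ℂ, ‖x‖ = r → (1 / 3) * ‖f.coeff k‖ * r ^ k < ‖f.eval x‖ := by
  set c : ℂ := f.coeff k with hc_def
  set S : ℝ := ∑ i ∈ (Finset.range (d + 1)).erase k, ‖f.coeff i‖ * r ^ i with hS_def
  have hS0 : 0 ≤ S := Finset.sum_nonneg fun i _ => by positivity
  have hpos : (0 : ℝ) < ‖c‖ * r ^ k := lt_of_le_of_lt (by linarith) hdom
  have hc : c ≠ 0 := by
    intro h
    rw [h] at hpos
    simp at hpos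
  have hS23 : S < 2 / 3 * (‖c‖ * r ^ k) := by linarith
  set q : Polynomial ℂ := f - Polynomial.C c * Polynomial.X ^ k with hq_def
  have hqbound : ∀ x : ℂ, ‖x‖ = r → ‖q.eval x‖ ≤ S := by
    intro x hx
    have hk1 : k ∈ Finset.range (d + 1) := Finset.mem_range.mpr (Nat.lt_succ_of_le hk)
    have hev : f.eval x = ∑ i ∈ Finset.range (d + 1), f.coeff i * x ^ i := by
      rw [← hdeg]; exact f.eval_eq_sum_range x
    have hqev : q.eval x = ∑ i ∈ (Finset.range (d + 1)).erase k, f.coeff i * x ^ i := by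
      have := Finset.add_sum_erase (Finset.range (d + 1)) (fun i => f.coeff i * x ^ i) hk1
      rw [hq_def]
      simp only [Polynomial.eval_sub, Polynomial.eval_mul, Polynomial.eval_C,
        Polynomial.eval_pow, Polynomial.eval_X, hev, ← this, hc_def]
      ring
    rw [hqev]
    calc ‖∑ i ∈ (Finset.range (d + 1)).erase k, f.coeff i * x ^ i‖
        ≤ ∑ i ∈ (Finset.range (d + 1)).erase k, ‖f.coeff i * x ^ i‖ := norm_sum_le _ _
      _ = S := by
          rw [hS_def]
          apply Finset.sum_congr rfl
          intro i _
          rw [norm_mul, norm_pow, hx]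
  set pt : ℝ → Polynomial ℂ := fun t =>
    Polynomial.C c * Polynomial.X ^ k + Polynomial.C (t : ℂ) * q with hpt_def
  have hpteval : ∀ (t : ℝ) (x : ℂ), (pt t).eval x = c * x ^ k + t * q.eval x := by
    intro t x
    simp [hpt_def]
  have hlow : ∀ t : ℝ, t ∈ Set.Icc (0 : ℝ) 1 → ∀ x : ℂ, ‖x‖ = r →
      1 / 3 * (‖c‖ * r ^ k) < ‖(pt t).eval x‖ := by
    intro t ht x hx
    have h1 : ‖c * x ^ k‖ = ‖c‖ * r ^ k := by rw [norm_mul, norm_pow, hx]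
    have h2 : ‖(t : ℂ) * q.eval x‖ ≤ S := by
      rw [norm_mul, Complex.norm_real, Real.norm_eq_abs]
      have h3 := hqbound x hx
      have h4 : |t| ≤ 1 := abs_le.mpr ⟨by linarith [ht.1], ht.2⟩
      nlinarith [norm_nonneg (q.eval x), abs_nonneg t]
    have h5 : ‖c * x ^ k‖ ≤ ‖(pt t).eval x‖ + ‖(t : ℂ) * q.eval x‖ := by
      rw [hpteval t x]
      calc ‖c * x ^ k‖ = ‖(c * x ^ k + t * q.eval x) - (t : ℂ) * q.eval x‖ := by ring_nf
        _ ≤ ‖c * x ^ k + (t : ℂ) * q.eval x‖ + ‖(t : ℂ) * q.eval x‖ := norm_sub_le _ _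
    linarith [h1 ▸ h5]
  have hpt1 : pt 1 = f := by
    rw [hpt_def, hq_def]
    simp only [Complex.ofReal_one, Polynomial.C_1, one_mul]
    ring
  constructor
  · -- root count
    set τ : ℝ → ℝ := fun t => max 0 (min t 1) with hτ_def
    have hτc : Continuous τ := continuous_const.max (continuous_id.min continuous_const)
    have hτmem : ∀ t, τ t ∈ Set.Icc (0 : ℝ) 1 :=
      fun t => ⟨le_max_left _ _, max_le zero_le_one (min_le_right _ _)⟩
    have hτ0 : τ 0 = 0 := by simp [hτ_def]
    have hτ1 : τ 1 = 1 := by simp [hτ_def]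
    have hcirc : ∀ θ : ℝ, ‖circleMap 0 r θ‖ = r := by
      intro θ
      rw [norm_circleMap_zero, abs_of_pos hr]
    have hne : ∀ (t : ℝ), ∀ x : ℂ, ‖x‖ = r → (pt (τ t)).eval x ≠ 0 := by
      intro t x hx h
      have := hlow (τ t) (hτmem t) x hx
      rw [h] at this
      simp only [norm_zero] at this
      nlinarith
    set n : ℝ → ℕ := fun t => (((pt (τ t)).roots.filter fun z => ‖z‖ < r).card) with hn_def
    have hN : ∀ t : ℝ,
        (∮ z in C(0, r), deriv (fun y => (pt (τ t)).eval y) z / (pt (τ t)).eval z) =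
          (2 * Real.pi * Complex.I) * (n t : ℂ) :=
      fun t => pellet_count _ hr (hne t)
    set A : Polynomial ℂ := Polynomial.derivative (Polynomial.C c * Polynomial.X ^ k) with hA_def
    set B : Polynomial ℂ := Polynomial.derivative q with hB_def
    have hder : ∀ s : ℝ, Polynomial.derivative (pt s) = A + Polynomial.C (s : ℂ) * B := by
      intro s
      rw [hpt_def, hA_def, hB_def]
      simp [Polynomial.derivative_add, Polynomial.derivative_C_mul]
    set G : ℝ → ℝ → ℂ := fun t θ => deriv (circleMap 0 r) θ *
      ((A.eval (circleMap 0 r θ) + (τ t : ℂ) * B.eval (circleMap 0 r θ)) /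
        (c * (circleMap 0 r θ) ^ k + (τ t : ℂ) * q.eval (circleMap 0 r θ))) with hG_def
    have hGeq : ∀ t : ℝ,
        (∮ z in C(0, r), deriv (fun y => (pt (τ t)).eval y) z / (pt (τ t)).eval z) =
          ∫ θ in (0:ℝ)..(2 * Real.pi), G t θ := by
      intro t
      rw [circleIntegral]
      apply intervalIntegral.integral_congr
      intro θ _
      have h1 : deriv (fun y => (pt (τ t)).eval y) (circleMap 0 r θ) =
          A.eval (circleMap 0 r θ) + (τ t : ℂ) * B.eval (circleMap 0 r θ) := by
        rw [Polynomial.deriv, hder (τ t)]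
        simp
      rw [hG_def]
      simp only [smul_eq_mul]
      rw [h1, hpteval]
    have hGc : Continuous (Function.uncurry G) := by
      show Continuous (fun p : ℝ × ℝ => G p.1 p.2)
      rw [hG_def]
      have hcm : Continuous (fun p : ℝ × ℝ => circleMap 0 r p.2) :=
        (continuous_circleMap 0 r).comp continuous_snd
      have hτ2 : Continuous (fun p : ℝ × ℝ => ((τ p.1 : ℝ) : ℂ)) :=
        Complex.continuous_ofReal.comp (hτc.comp continuous_fst)
      apply Continuous.mul
      · simp only [deriv_circleMap]
        exact hcm.mul continuous_const
      · apply Continuous.div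
        · exact (A.continuous_aeval.comp hcm).add (hτ2.mul (B.continuous_aeval.comp hcm))
        · exact (continuous_const.mul (hcm.pow k)).add (hτ2.mul (q.continuous_aeval.comp hcm))
        · intro p
          have h := hne p.1 (circleMap 0 r p.2) (hcirc p.2)
          rw [hpteval] at h
          exact h
    have hcont : Continuous fun t => ∫ θ in (0:ℝ)..(2 * Real.pi), G t θ :=
      intervalIntegral.continuous_parametric_intervalIntegral_of_continuous' (f := G)
        hGc 0 (2 * Real.pi)
    set F : ℝ → ℝ := fun t =>
      ((∫ θ in (0:ℝ)..(2 * Real.pi), G t θ) / (2 * Real.pi * Complex.I)).re with hF_def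
    have hFc : Continuous F := Complex.continuous_re.comp (hcont.div_const _)
    have h2πI : (2 * (Real.pi : ℂ) * Complex.I) ≠ 0 := by
      simp [Real.pi_ne_zero, Complex.I_ne_zero]
    have hFval : ∀ t : ℝ, F t = (n t : ℝ) := by
      intro t
      rw [hF_def]
      simp only
      rw [← hGeq t, hN t, mul_comm, mul_div_assoc, div_self h2πI, mul_one]
      simp
    have hn0 : n 0 = k := by
      have hpt0 : pt (τ 0) = Polynomial.C c * Polynomial.X ^ k := by
        rw [hτ0, hpt_def]; simp
      have hroots0 : (pt (τ 0)).roots = Multiset.replicate k 0 := by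
        rw [hpt0, Polynomial.roots_C_mul _ hc, Polynomial.roots_pow, Polynomial.roots_X,
          Multiset.nsmul_singleton]
      rw [hn_def]
      simp only [hroots0]
      rw [Multiset.filter_eq_self.mpr, Multiset.card_replicate]
      intro a ha
      rw [Multiset.eq_of_mem_replicate ha]
      simpa using hr
    have hn1 : n 1 = (f.roots.filter fun z => ‖z‖ < r).card := by
      have hpt1' : pt (τ 1) = f := by rw [hτ1, hpt1]
      rw [hn_def]
      simp only [hpt1']
    by_contra hcon
    have hne'' : n 1 ≠ n 0 := by rw [hn1, hn0]; exact hcon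
    have key := intermediate_value_uIcc (a := (0:ℝ)) (b := 1) hFc.continuousOn
    set M : ℕ := min (n 0) (n 1) with hM_def
    have hy : ((M : ℝ) + 1 / 2) ∈ Set.uIcc (F 0) (F 1) := by
      rw [hFval 0, hFval 1, Set.mem_uIcc]
      rcases lt_or_gt_of_ne hne'' with h | h
      · right
        have e1 : M = n 1 := by rw [hM_def]; omega
        have e2 : M + 1 ≤ n 0 := by rw [hM_def]; omega
        constructor
        · have : (n 1 : ℝ) ≤ (M : ℝ) := by exact_mod_cast e1.ge
          linarith
        · have : (M : ℝ) + 1 ≤ (n 0 : ℝ) := by exact_mod_cast e2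
          linarith
      · left
        have e1 : M = n 0 := by rw [hM_def]; omega
        have e2 : M + 1 ≤ n 1 := by rw [hM_def]; omega
        constructor
        · have : (n 0 : ℝ) ≤ (M : ℝ) := by exact_mod_cast e1.ge
          linarith
        · have : (M : ℝ) + 1 ≤ (n 1 : ℝ) := by exact_mod_cast e2
          linarith
    obtain ⟨t, _, hFt⟩ := key hy
    rw [hFval t] at hFt
    have hsplit : n t ≤ M ∨ M + 1 ≤ n t := by rw [hM_def]; omega
    rcases hsplit with h | h
    · have : (n t : ℝ) ≤ (M : ℝ) := by exact_mod_cast h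
      linarith
    · have : (M : ℝ) + 1 ≤ (n t : ℝ) := by exact_mod_cast h
      linarith
  · intro x hx
    have := hlow 1 ⟨zero_le_one, le_refl 1⟩ x hx
    rw [hpt1] at this
    calc 1 / 3 * ‖f.coeff k‖ * r ^ k = 1 / 3 * (‖c‖ * r ^ k) := by rw [hc_def]; ring
      _ < ‖f.eval x‖ := this
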